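/- Let $(E,\rho)$ be a quasi-metric space and $\beta$ a real number with $0<\beta\le(\log_2 C_\rho)^{-1}$. Suppose $F_0,F_1\subseteq E$ are nonempty with $\mathrm{dist}_\rho(F_0,F_1)>0$. Then there exists a function $\eta:E\to\mathbb{R}$ with $0\le\eta\le1$ on $E$, $\eta\equiv 0$ on $F_0$, $\eta\equiv 1$ on $F_1$, and $\sup_{x\ne y} \frac{|\eta(x)-\eta(y)|}{\rho(x,y)^\beta} \le C\, \mathrm{dist}_\rho(F_0,F_1)^{-\beta}$ for some finite constant $C>0$ depending only on $\rho$. -/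

import Mathlib

namespace QMUaux

variable {X : Type*}

/-- prefix sums of chain weights -/
noncomputable def pm (r : X → X → ℝ) (f : ℕ → X) (j : ℕ) : ℝ :=
  ∑ i ∈ Finset.range j, r (f i) (f (i + 1))

/-- midpoints of chain weights -/
noncomputable def mid (r : X → X → ℝ) (f : ℕ → X) (j : ℕ) : ℝ :=
  pm r f j + r (f j) (f (j + 1)) / 2

lemma pm_nonneg (r : X → X → ℝ) (hr0 : ∀ x y, 0 ≤ r x y) (f : ℕ → X) (j : ℕ) :
    0 ≤ pm r f j :=
  Finset.sum_nonneg fun _ _ => hr0 _ _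

lemma pm_succ (r : X → X → ℝ) (f : ℕ → X) (j : ℕ) :
    pm r f (j + 1) = pm r f j + r (f j) (f (j + 1)) := by
  unfold pm; rw [Finset.sum_range_succ]

lemma mid_succ_sub (r : X → X → ℝ) (f : ℕ → X) (j : ℕ) :
    mid r f (j + 1) - mid r f j = (r (f j) (f (j + 1)) + r (f (j + 1)) (f (j + 2))) / 2 := by
  unfold mid
  rw [pm_succ]
  ring

lemma mid_mono (r : X → X → ℝ) (hr0 : ∀ x y, 0 ≤ r x y) (f : ℕ → X) :
    Monotone (mid r f) := by
  apply monotone_nat_of_le_succ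
  intro j
  have h := mid_succ_sub r f j
  have h1 := hr0 (f j) (f (j + 1))
  have h2 := hr0 (f (j + 1)) (f (j + 2))
  linarith

lemma pm_shift (r : X → X → ℝ) (f : ℕ → X) (a : ℕ) :
    ∀ j, pm r (fun i => f (a + i)) j = pm r f (a + j) - pm r f a := by
  intro j
  induction j with
  | zero => simp [pm]
  | succ j ihj =>
    have h1 : pm r (fun i => f (a + i)) (j + 1)
        = pm r (fun i => f (a + i)) j + r (f (a + j)) (f (a + j + 1)) :=
      pm_succ r (fun i => f (a + i)) j
    have h2 : pm r f (a + (j + 1)) = pm r f (a + j) + r (f (a + j)) (f (a + j + 1)) :=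
      pm_succ r f (a + j)
    rw [h1, ihj, h2]
    ring

lemma mid_shift (r : X → X → ℝ) (f : ℕ → X) (a j : ℕ) :
    mid r (fun i => f (a + i)) j = mid r f (a + j) - pm r f a := by
  show pm r (fun i => f (a + i)) j + r (f (a + j)) (f (a + (j + 1))) / 2
      = pm r f (a + j) + r (f (a + j)) (f (a + j + 1)) / 2 - pm r f a
  rw [pm_shift]
  have he : a + (j + 1) = a + j + 1 := rfl
  rw [he]
  ring

/-- Key chain lemma (Gilbert–Moore midpoint induction): for a symmetric-ish
nonnegative `r` satisfying the 3-point quasi-triangle inequality with constant 2,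
any chain of length ≥ 2 satisfies `r(x₀,x_c) ≤ 4*(m_{c-1} - m₀)`. -/
lemma key (r : X → X → ℝ) (hr0 : ∀ x y, 0 ≤ r x y)
    (hrrefl : ∀ x, r x x = 0)
    (hrzero : ∀ x y, r x y = 0 → x = y)
    (htri : ∀ x y z, r x z ≤ 2 * max (r x y) (r y z)) :
    ∀ c, 2 ≤ c → ∀ f : ℕ → X, r (f 0) (f c) ≤ 4 * (mid r f (c - 1) - mid r f 0) := by
  intro c
  induction c using Nat.strong_induction_on with
  | _ c ih =>
  intro hc f
  obtain ⟨k, rfl⟩ : ∃ k, c = k + 2 := ⟨c - 2, by omega⟩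
  have hidx : k + 2 - 1 = k + 1 := rfl
  rw [hidx]
  have hmono := mid_mono r hr0 f
  set D : ℝ := mid r f (k + 1) - mid r f 0 with hD'
  have hD0 : 0 ≤ D := sub_nonneg.2 (hmono (by omega))
  rcases hD0.eq_or_lt with hD | hD
  · -- degenerate case : all weights vanish, all points coincide
    have hteq : ∀ i, i ≤ k + 1 → r (f i) (f (i + 1)) = 0 := by
      intro i hi
      refine le_antisymm ?_ (hr0 _ _)
      rcases Nat.eq_zero_or_pos i with h0 | hpos
      · subst h0
        have h := mid_succ_sub r f 0
        norm_num at h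
        have h1 : mid r f 1 ≤ mid r f (k + 1) := hmono (by omega)
        have h2 := hr0 (f 1) (f 2)
        linarith
      · obtain ⟨j, rfl⟩ : ∃ j, i = j + 1 := ⟨i - 1, by omega⟩
        have h := mid_succ_sub r f j
        have h1 : mid r f (j + 1) ≤ mid r f (k + 1) := hmono (by omega)
        have h2 : mid r f 0 ≤ mid r f j := hmono (Nat.zero_le _)
        have h3 := hr0 (f j) (f (j + 1))
        linarith
    have hfeq : ∀ i, i ≤ k + 2 → f 0 = f i := by
      intro i
      induction i with
      | zero => intro _; rfl
      | succ i ihi =>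
        intro hi
        have h1 := ihi (by omega)
        have h2 : f i = f (i + 1) := hrzero _ _ (hteq i (by omega))
        rw [h1, h2]
    have : r (f 0) (f (k + 2)) = 0 := by
      rw [← hfeq (k + 2) le_rfl, hrrefl]
    rw [this, ← hD]
    norm_num
  · -- main case
    classical
    set γ : ℝ := mid r f 0 + D / 2 with hγ
    set w := Nat.findGreatest (fun j => mid r f j ≤ γ) (k + 1) with hw
    have hP0 : mid r f 0 ≤ γ := by rw [hγ]; linarith
    have hPw : mid r f w ≤ γ := by
      rw [hw]
      exact Nat.findGreatest_spec (P := fun j => mid r f j ≤ γ) (Nat.zero_le _) hP0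
    have hwle : w ≤ k + 1 := by rw [hw]; exact Nat.findGreatest_le _
    have hPtop : ¬ mid r f (k + 1) ≤ γ := by
      rw [hγ]
      push_neg
      have : mid r f (k + 1) = mid r f 0 + D := by rw [hD']; ring
      rw [this]
      linarith
    have hwk : w ≤ k := by
      have : w ≠ k + 1 := fun h => hPtop (h ▸ hPw)
      omega
    have hPw1 : ¬ mid r f (w + 1) ≤ γ := by
      apply Nat.findGreatest_is_greatest (P := fun j => mid r f j ≤ γ) (n := k + 1)
        (k := w + 1)
      · rw [← hw]; omega
      · omega
    push_neg at hPw1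
    -- left piece
    have hL : r (f 0) (f (w + 1)) ≤ 2 * D := by
      rcases Nat.eq_zero_or_pos w with hw0 | hw0
      · rw [hw0]
        have h := mid_succ_sub r f 0
        norm_num at h
        have h1 : mid r f 1 ≤ mid r f (k + 1) := hmono (by omega)
        have h2 := hr0 (f 1) (f 2)
        linarith
      · have hIH := ih (w + 1) (by omega) (by omega) f
        have hidx2 : w + 1 - 1 = w := rfl
        rw [hidx2] at hIH
        have hPw' : mid r f w ≤ mid r f 0 + D / 2 := by rw [← hγ]; exact hPw
        linarith
    -- right piece
    have hR : r (f (w + 1)) (f (k + 2)) ≤ 2 * D := by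
      rcases eq_or_lt_of_le hwk with hwk' | hwk'
      · -- w = k : single last weight
        rw [hwk']
        have h := mid_succ_sub r f k
        have h1 : mid r f 0 ≤ mid r f k := hmono (Nat.zero_le _)
        have h2 := hr0 (f k) (f (k + 1))
        nlinarith
      · -- w < k : genuine right chain of length k+1-w ≥ 2
        have hIH : r (f (w + 1)) (f (w + 1 + (k + 1 - w)))
            ≤ 4 * (mid r (fun i => f (w + 1 + i)) (k + 1 - w - 1)
                - mid r (fun i => f (w + 1 + i)) 0) :=
          ih (k + 1 - w) (by omega) (by omega) (fun i => f (w + 1 + i))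
        have he1 : w + 1 + (k + 1 - w) = k + 2 := by omega
        have he2 : k + 1 - w - 1 = k - w := by omega
        rw [he1, he2, mid_shift, mid_shift] at hIH
        have he3 : w + 1 + (k - w) = k + 1 := by omega
        have he4 : w + 1 + 0 = w + 1 := by omega
        rw [he3, he4] at hIH
        have hm0 : mid r f 0 ≤ mid r f (w + 1) := hmono (Nat.zero_le _)
        have hmtop : mid r f (w + 1) ≤ mid r f (k + 1) := hmono (by omega)
        have hγ' : mid r f 0 + D / 2 < mid r f (w + 1) := by rw [← hγ]; exact hPw1
        linarith
    calc r (f 0) (f (k + 2)) ≤ 2 * max (r (f 0) (f (w + 1))) (r (f (w + 1)) (f (k + 2))) :=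
          htri _ _ _
      _ ≤ 2 * (2 * D) := by
          have hm := max_le hL hR
          linarith
      _ = 4 * D := by ring

/-- Chain inequality: `r(x₀,xₙ) ≤ 4 * Σ weights`. -/
lemma chain (r : X → X → ℝ) (hr0 : ∀ x y, 0 ≤ r x y)
    (hrrefl : ∀ x, r x x = 0)
    (hrzero : ∀ x y, r x y = 0 → x = y)
    (htri : ∀ x y z, r x z ≤ 2 * max (r x y) (r y z)) :
    ∀ (f : ℕ → X) (n : ℕ), r (f 0) (f n) ≤ 4 * pm r f n := by
  intro f n
  match n with
  | 0 => simp [pm, hrrefl]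
  | 1 =>
    have h := hr0 (f 0) (f 1)
    have : pm r f 1 = r (f 0) (f 1) := by simp [pm]
    rw [this]
    linarith
  | (k + 2) =>
    have h := key r hr0 hrrefl hrzero htri (k + 2) (by omega) f
    have hidx : k + 2 - 1 = k + 1 := rfl
    rw [hidx] at h
    have h2 : mid r f (k + 1) - mid r f 0 ≤ pm r f (k + 2) := by
      have e1 : pm r f (k + 2) = pm r f (k + 1) + r (f (k + 1)) (f (k + 2)) := pm_succ r f _
      have e2 : mid r f (k + 1) = pm r f (k + 1) + r (f (k + 1)) (f (k + 2)) / 2 := rfl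
      have e3 : mid r f 0 = pm r f 0 + r (f 0) (f 1) / 2 := rfl
      have e4 : pm r f 0 = 0 := by simp [pm]
      have h0 := hr0 (f 0) (f 1)
      have h1 := hr0 (f (k + 1)) (f (k + 2))
      rw [e1, e2, e3, e4]
      linarith
    linarith

lemma min1_lip (a b : ℝ) : |min 1 a - min 1 b| ≤ |a - b| := by
  have key : ∀ u v : ℝ, v ≤ u → min 1 u - min 1 v ≤ u - v := by
    intro u v huv
    have h1 : min 1 u ≤ min (1 + (u - v)) (v + (u - v)) := by
      apply min_le_min <;> linarith
    have h2 : min (1 + (u - v)) (v + (u - v)) = min 1 v + (u - v) := by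
      rw [← min_add_add_right]
    linarith [h1, h2.le]
  rcases le_total a b with h | h
  · have h1 : min 1 a ≤ min 1 b := min_le_min le_rfl h
    have h2 := key b a h
    rw [abs_sub_comm a b, abs_of_nonneg (by linarith : (0:ℝ) ≤ b - a)]
    rw [abs_sub_comm]
    rw [abs_of_nonneg (by linarith : (0:ℝ) ≤ min 1 b - min 1 a)]
    linarith
  · have h1 : min 1 b ≤ min 1 a := min_le_min le_rfl h
    have h2 := key a b h
    rw [abs_of_nonneg (by linarith : (0:ℝ) ≤ a - b)]
    rw [abs_of_nonneg (by linarith : (0:ℝ) ≤ min 1 a - min 1 b)]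
    linarith

end QMUaux

/-- Quantitative Urysohn lemma with Hölder control on a quasi-metric space: if
`0 < β` with `Cρ^β ≤ 2` (i.e. `β ≤ (log₂ Cρ)⁻¹`) and `F₀, F₁` are nonempty sets at
positive distance, then there is `η : X → ℝ`, `0 ≤ η ≤ 1`, `η ≡ 0` on `F₀`, `η ≡ 1` on
`F₁`, whose `β`-Hölder seminorm is at most `C · dist(F₀,F₁)^{-β}` with `C` depending
only on `ρ`. -/
theorem quasi_metric_urysohn_holder {X : Type*} (ρ : X → X → ℝ) (C₀ Cρ : ℝ)
    (hC₀ : 1 ≤ C₀) (hCρ : 1 ≤ Cρ)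
    (hnonneg : ∀ x y, 0 ≤ ρ x y)
    (hzero : ∀ x y, ρ x y = 0 ↔ x = y)
    (hsym : ∀ x y, ρ y x ≤ C₀ * ρ x y)
    (htri : ∀ x y z, ρ x y ≤ Cρ * max (ρ x z) (ρ z y))
    (β : ℝ) (hβ : 0 < β) (hβ2 : Cρ ^ β ≤ 2)
    (F₀ F₁ : Set X) (h₀ : F₀.Nonempty) (h₁ : F₁.Nonempty)
    (hdist : 0 < sInf (Set.image2 ρ F₀ F₁)) :
    ∃ C : ℝ, 0 < C ∧ ∃ η : X → ℝ,
      (∀ x, 0 ≤ η x ∧ η x ≤ 1) ∧ (∀ x ∈ F₀, η x = 0) ∧ (∀ x ∈ F₁, η x = 1) ∧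
      ∀ x y : X, x ≠ y →
        |η x - η y| ≤ C * sInf (Set.image2 ρ F₀ F₁) ^ (-β) * ρ x y ^ β := by
  classical
  set δ : ℝ := sInf (Set.image2 ρ F₀ F₁) with hδdef
  have hδ : 0 < δ := hdist
  have hδβ : 0 < δ ^ β := Real.rpow_pos_of_pos hδ β
  -- the symmetrized quasi-distance and its β-power
  set σ : X → X → ℝ := fun x y => max (ρ x y) (ρ y x) with hσdef
  set r : X → X → ℝ := fun x y => σ x y ^ β with hrdef
  have hσ0 : ∀ x y, 0 ≤ σ x y := fun x y => le_trans (hnonneg x y) (le_max_left _ _)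
  have hσsymm : ∀ x y, σ x y = σ y x := fun x y => max_comm _ _
  have hr0 : ∀ x y, 0 ≤ r x y := fun x y => Real.rpow_nonneg (hσ0 x y) β
  have hrsymm : ∀ x y, r x y = r y x := fun x y => by rw [hrdef]; simp only; rw [hσsymm]
  have hrrefl : ∀ x, r x x = 0 := by
    intro x
    have h1 : σ x x = 0 := by
      rw [hσdef]; simp only [max_self]
      exact (hzero x x).mpr rfl
    rw [hrdef]; simp only [h1]
    exact Real.zero_rpow (ne_of_gt hβ)
  have hrzero : ∀ x y, r x y = 0 → x = y := by
    intro x y h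
    by_contra hne
    have h1 : ρ x y ≠ 0 := fun h0 => hne ((hzero x y).mp h0)
    have h2 : 0 < ρ x y := lt_of_le_of_ne (hnonneg x y) (Ne.symm h1)
    have h3 : 0 < σ x y := lt_of_lt_of_le h2 (le_max_left _ _)
    have h4 : 0 < r x y := Real.rpow_pos_of_pos h3 β
    linarith [h4, h.le]
  have hσtri : ∀ x y z, σ x z ≤ Cρ * max (σ x y) (σ y z) := by
    intro x y z
    have hM0 : 0 ≤ max (σ x y) (σ y z) := le_trans (hσ0 x y) (le_max_left _ _)
    apply max_le
    · calc ρ x z ≤ Cρ * max (ρ x y) (ρ y z) := htri x z y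
        _ ≤ Cρ * max (σ x y) (σ y z) := by
            apply mul_le_mul_of_nonneg_left _ (by linarith)
            exact max_le_max (le_max_left _ _) (le_max_left _ _)
    · calc ρ z x ≤ Cρ * max (ρ z y) (ρ y x) := htri z x y
        _ ≤ Cρ * max (σ x y) (σ y z) := by
            apply mul_le_mul_of_nonneg_left _ (by linarith)
            apply max_le
            · exact le_trans (le_max_right _ _) (le_max_right _ _)
            · exact le_trans (le_max_right _ _) (le_max_left _ _)
  have hrtri : ∀ x y z, r x z ≤ 2 * max (r x y) (r y z) := by
    intro x y z
    have hM0 : 0 ≤ max (σ x y) (σ y z) := le_trans (hσ0 x y) (le_max_left _ _)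
    have h1 : r x z ≤ (Cρ * max (σ x y) (σ y z)) ^ β :=
      Real.rpow_le_rpow (hσ0 x z) (hσtri x y z) hβ.le
    have h2 : (Cρ * max (σ x y) (σ y z)) ^ β = Cρ ^ β * (max (σ x y) (σ y z)) ^ β :=
      Real.mul_rpow (by linarith) hM0
    have h3 : (max (σ x y) (σ y z)) ^ β = max (σ x y ^ β) (σ y z ^ β) := by
      rcases le_total (σ x y) (σ y z) with h | h
      · rw [max_eq_right h, max_eq_right (Real.rpow_le_rpow (hσ0 x y) h hβ.le)]
      · rw [max_eq_left h, max_eq_left (Real.rpow_le_rpow (hσ0 y z) h hβ.le)]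
    have h4 : Cρ ^ β * (max (σ x y) (σ y z)) ^ β ≤ 2 * (max (σ x y) (σ y z)) ^ β := by
      apply mul_le_mul_of_nonneg_right hβ2 (Real.rpow_nonneg hM0 β)
    calc r x z ≤ Cρ ^ β * (max (σ x y) (σ y z)) ^ β := by rw [← h2]; exact h1
      _ ≤ 2 * (max (σ x y) (σ y z)) ^ β := h4
      _ = 2 * max (r x y) (r y z) := by rw [h3]
  -- distance from F₀ via chains
  set A : X → Set ℝ := fun x =>
    {s | ∃ (n : ℕ) (f : ℕ → X), f 0 ∈ F₀ ∧ f n = x ∧ s = QMUaux.pm r f n} with hAdef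
  have hAlb : ∀ x, ∀ s ∈ A x, (0:ℝ) ≤ s := by
    rintro x s ⟨n, f, _, _, rfl⟩
    exact QMUaux.pm_nonneg r hr0 f n
  have hAbdd : ∀ x, BddBelow (A x) := fun x => ⟨0, fun s hs => hAlb x s hs⟩
  have hAne : ∀ x, (A x).Nonempty := by
    intro x
    obtain ⟨z, hz⟩ := h₀
    refine ⟨QMUaux.pm r (fun i => if i = 0 then z else x) 1, 1,
      fun i => if i = 0 then z else x, ?_, ?_, rfl⟩
    · simp [hz]
    · simp
  set D : X → ℝ := fun x => sInf (A x) with hDdef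
  have hD0 : ∀ x, 0 ≤ D x := fun x => le_csInf (hAne x) (hAlb x)
  have hDF₀ : ∀ x ∈ F₀, D x = 0 := by
    intro x hx
    refine le_antisymm ?_ (hD0 x)
    apply csInf_le (hAbdd x)
    exact ⟨0, fun _ => x, hx, rfl, by simp [QMUaux.pm]⟩
  have hδle : ∀ a ∈ F₀, ∀ b ∈ F₁, δ ≤ ρ a b := by
    intro a ha b hb
    apply csInf_le
    · refine ⟨0, ?_⟩
      rintro s ⟨u, hu, v, hv, rfl⟩
      exact hnonneg u v
    · exact Set.mem_image2_of_mem ha hb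
  have hDF₁ : ∀ x ∈ F₁, δ ^ β / 4 ≤ D x := by
    intro x hx
    apply le_csInf (hAne x)
    rintro s ⟨n, f, hf0, hfn, rfl⟩
    have hchain := QMUaux.chain r hr0 hrrefl hrzero hrtri f n
    rw [hfn] at hchain
    have h1 : δ ≤ ρ (f 0) x := hδle _ hf0 _ hx
    have h2 : ρ (f 0) x ≤ σ (f 0) x := le_max_left _ _
    have h3 : δ ^ β ≤ σ (f 0) x ^ β := Real.rpow_le_rpow hδ.le (by linarith) hβ.le
    have h4 : δ ^ β ≤ r (f 0) x := h3
    linarith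
  have hDlip : ∀ x y, D x ≤ D y + r y x := by
    intro x y
    have hstep : ∀ s ∈ A y, D x ≤ s + r y x := by
      rintro s ⟨n, f, hf0, hfn, rfl⟩
      set g : ℕ → X := fun i => if i ≤ n then f i else x with hgdef
      have hg0 : g 0 = f 0 := by rw [hgdef]; exact if_pos (Nat.zero_le _)
      have hgn : g n = f n := by rw [hgdef]; exact if_pos le_rfl
      have hgn1 : g (n + 1) = x := by rw [hgdef]; exact if_neg (by omega)
      have hpmg : QMUaux.pm r g (n + 1) = QMUaux.pm r f n + r y x := by
        rw [QMUaux.pm_succ]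
        have h5 : QMUaux.pm r g n = QMUaux.pm r f n := by
          unfold QMUaux.pm
          apply Finset.sum_congr rfl
          intro i hi
          have hi' := Finset.mem_range.mp hi
          have hin : i ≤ n := by omega
          have hin1 : i + 1 ≤ n := by omega
          have e1 : g i = f i := by rw [hgdef]; exact if_pos hin
          have e2 : g (i + 1) = f (i + 1) := by rw [hgdef]; exact if_pos hin1
          rw [e1, e2]
        rw [h5, hgn, hgn1, hfn]
      apply le_trans (csInf_le (hAbdd x) ⟨n + 1, g, by rw [hg0]; exact hf0, hgn1, rfl⟩)
      rw [hpmg]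
    have h6 : D x - r y x ≤ D y := by
      apply le_csInf (hAne y)
      intro s hs
      linarith [hstep s hs]
    linarith
  have hDabs : ∀ x y, |D x - D y| ≤ r x y := by
    intro x y
    rw [abs_sub_le_iff]
    constructor
    · have := hDlip x y; rw [hrsymm y x] at this; linarith
    · have := hDlip y x; linarith
  -- the function η
  refine ⟨4 * C₀ ^ β, by positivity, fun x => min 1 (4 / δ ^ β * D x), ?_, ?_, ?_, ?_⟩
  · intro x
    show 0 ≤ min 1 (4 / δ ^ β * D x) ∧ min 1 (4 / δ ^ β * D x) ≤ 1
    constructor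
    · apply le_min (by norm_num)
      have := hD0 x
      positivity
    · exact min_le_left _ _
  · intro x hx
    show min 1 (4 / δ ^ β * D x) = 0
    rw [hDF₀ x hx]
    simp
  · intro x hx
    show min 1 (4 / δ ^ β * D x) = 1
    have h1 : (1:ℝ) ≤ 4 / δ ^ β * D x := by
      have h2 := hDF₁ x hx
      rw [div_mul_eq_mul_div, le_div_iff₀ hδβ]
      linarith
    exact min_eq_left h1
  · intro x y _
    show |min 1 (4 / δ ^ β * D x) - min 1 (4 / δ ^ β * D y)| ≤ _
    have hlip := QMUaux.min1_lip (4 / δ ^ β * D x) (4 / δ ^ β * D y)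
    have h1 : |4 / δ ^ β * D x - 4 / δ ^ β * D y| = 4 / δ ^ β * |D x - D y| := by
      rw [← mul_sub, abs_mul, abs_of_nonneg (by positivity : (0:ℝ) ≤ 4 / δ ^ β)]
    have h2 : 4 / δ ^ β * |D x - D y| ≤ 4 / δ ^ β * r x y := by
      apply mul_le_mul_of_nonneg_left (hDabs x y) (by positivity)
    have h3 : σ x y ≤ C₀ * ρ x y := by
      apply max_le
      · calc ρ x y = 1 * ρ x y := (one_mul _).symm
          _ ≤ C₀ * ρ x y := mul_le_mul_of_nonneg_right hC₀ (hnonneg x y)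
      · exact hsym x y
    have h4 : r x y ≤ C₀ ^ β * ρ x y ^ β := by
      calc r x y ≤ (C₀ * ρ x y) ^ β := Real.rpow_le_rpow (hσ0 x y) h3 hβ.le
        _ = C₀ ^ β * ρ x y ^ β := Real.mul_rpow (by linarith) (hnonneg x y)
    have h5 : 4 / δ ^ β * r x y ≤ 4 / δ ^ β * (C₀ ^ β * ρ x y ^ β) := by
      apply mul_le_mul_of_nonneg_left h4 (by positivity)
    have h6 : 4 / δ ^ β * (C₀ ^ β * ρ x y ^ β) = 4 * C₀ ^ β * δ ^ (-β) * ρ x y ^ β := by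
      rw [Real.rpow_neg hδ.le]
      field_simp
    calc |min 1 (4 / δ ^ β * D x) - min 1 (4 / δ ^ β * D y)|
        ≤ |4 / δ ^ β * D x - 4 / δ ^ β * D y| := hlip
      _ = 4 / δ ^ β * |D x - D y| := h1
      _ ≤ 4 / δ ^ β * r x y := h2
      _ ≤ 4 / δ ^ β * (C₀ ^ β * ρ x y ^ β) := h5
      _ = 4 * C₀ ^ β * δ ^ (-β) * ρ x y ^ β := h6
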